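/- For real y, z > 0 with y ≠ z, R_D(0,y,z) = (3/(z(y−z))) [2 R_G(y,z,0) − z R_F(y,z,0)]. -/

import Mathlib

open MeasureTheory Real Set Filter Topology

noncomputable def RC (x y : ℝ) : ℝ :=
  (1/2) * ∫ t in Set.Ioi (0:ℝ), (Real.sqrt (t + x))⁻¹ * (t + y)⁻¹

noncomputable def RF (x y z : ℝ) : ℝ :=
  (1/2) * ∫ t in Set.Ioi (0:ℝ), (Real.sqrt ((t + x) * (t + y) * (t + z)))⁻¹

noncomputable def RD (x y z : ℝ) : ℝ :=
  (3/2) * ∫ t in Set.Ioi (0:ℝ),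
    (Real.sqrt ((t + x) * (t + y)))⁻¹ * ((t + z) * Real.sqrt (t + z))⁻¹

noncomputable def RJ (x y z p : ℝ) : ℝ :=
  (3/2) * ∫ t in Set.Ioi (0:ℝ),
    (Real.sqrt ((t + x) * (t + y) * (t + z)))⁻¹ * (t + p)⁻¹

noncomputable def RG (x y z : ℝ) : ℝ :=
  (1/4) * ∫ t in Set.Ioi (0:ℝ),
    (Real.sqrt ((t + x) * (t + y) * (t + z)))⁻¹ *
      (x / (t + x) + y / (t + y) + z / (t + z)) * t

lemma sqrt_tendsto_atTop' : Tendsto Real.sqrt atTop atTop := by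
  apply tendsto_atTop_atTop.2
  intro b
  refine ⟨max 0 (b^2), fun a ha => ?_⟩
  have h1 : b^2 ≤ a := le_trans (le_max_right _ _) ha
  calc b ≤ |b| := le_abs_self b
    _ = Real.sqrt (b^2) := (Real.sqrt_sq_eq_abs b).symm
    _ ≤ Real.sqrt a := Real.sqrt_le_sqrt h1

lemma base_int {m : ℝ} (hm : 0 < m) :
    IntegrableOn (fun t : ℝ => (Real.sqrt t * (t + m))⁻¹) (Set.Ioi 0) := by
  have hsm : 0 < Real.sqrt m := Real.sqrt_pos.2 hm
  apply integrableOn_Ioi_deriv_of_nonneg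
    (g := fun t : ℝ => 2 / Real.sqrt m * Real.arctan (Real.sqrt t / Real.sqrt m))
    (l := 2 / Real.sqrt m * (π/2))
  · apply ContinuousAt.continuousWithinAt
    exact (continuousAt_const.mul (Real.continuous_arctan.continuousAt.comp
      ((Real.continuous_sqrt.continuousAt).div_const _)))
  · intro x hx
    have hx0 : (0:ℝ) < x := hx
    have hs : HasDerivAt Real.sqrt (1 / (2 * Real.sqrt x)) x := Real.hasDerivAt_sqrt hx0.ne'
    have h2 : HasDerivAt (fun t => Real.sqrt t / Real.sqrt m)
        ((1 / (2 * Real.sqrt x)) / Real.sqrt m) x := hs.div_const _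
    have h3 := (h2.arctan).const_mul (2 / Real.sqrt m)
    refine h3.congr_deriv (Eq.symm ?_)
    have hsx : 0 < Real.sqrt x := Real.sqrt_pos.2 hx0
    have hxx : Real.sqrt x * Real.sqrt x = x := Real.mul_self_sqrt hx0.le
    have hmm : Real.sqrt m * Real.sqrt m = m := Real.mul_self_sqrt hm.le
    have hp : (Real.sqrt x / Real.sqrt m)^2 = x / m := by
      rw [div_pow, Real.sq_sqrt hx0.le, Real.sq_sqrt hm.le]
    rw [hp]
    rw [eq_comm]
    field_simp
    linear_combination (-(m + x)) * hmm
  · intro x hx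
    have hx0 : (0:ℝ) < x := hx
    have : 0 < Real.sqrt x * (x + m) := by positivity
    positivity
  · have h1 : Tendsto (fun t : ℝ => Real.sqrt t / Real.sqrt m) atTop atTop :=
      (sqrt_tendsto_atTop').atTop_div_const hsm
    have h2 : Tendsto (fun t : ℝ => Real.arctan (Real.sqrt t / Real.sqrt m)) atTop (𝓝 (π/2)) :=
      (Real.tendsto_arctan_atTop.mono_right nhdsWithin_le_nhds).comp h1
    exact h2.const_mul _

section helpers
variable {y z : ℝ}

lemma fF_le (hy : 0 < y) (hz : 0 < z) {t : ℝ} (ht : 0 < t) :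
    (Real.sqrt ((t+y)*(t+z)*t))⁻¹ ≤ (Real.sqrt t * (t + min y z))⁻¹ := by
  set m := min y z with hmdef
  have hm0 : 0 < m := lt_min hy hz
  have hty : (0:ℝ) < t + y := by linarith
  have htz : (0:ℝ) < t + z := by linarith
  have htm : (0:ℝ) < t + m := by linarith
  apply inv_anti₀ (by positivity)
  rw [Real.sqrt_mul (by positivity) t, Real.sqrt_mul hty.le]
  have h1 : Real.sqrt (t+m) ≤ Real.sqrt (t+y) :=
    Real.sqrt_le_sqrt (by linarith [min_le_left y z])
  have h2 : Real.sqrt (t+m) ≤ Real.sqrt (t+z) :=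
    Real.sqrt_le_sqrt (by linarith [min_le_right y z])
  have key : t + m ≤ Real.sqrt (t+y) * Real.sqrt (t+z) := by
    calc t + m = Real.sqrt (t+m) * Real.sqrt (t+m) := (Real.mul_self_sqrt htm.le).symm
      _ ≤ Real.sqrt (t+y) * Real.sqrt (t+z) :=
        mul_le_mul h1 h2 (Real.sqrt_nonneg _) (Real.sqrt_nonneg _)
  calc Real.sqrt t * (t+m) = (t+m) * Real.sqrt t := mul_comm _ _
    _ ≤ (Real.sqrt (t+y) * Real.sqrt (t+z)) * Real.sqrt t :=
      mul_le_mul_of_nonneg_right key (Real.sqrt_nonneg t)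

lemma intF (hy : 0 < y) (hz : 0 < z) :
    IntegrableOn (fun t : ℝ => (Real.sqrt ((t+y)*(t+z)*t))⁻¹) (Set.Ioi 0) := by
  have hm0 : 0 < min y z := lt_min hy hz
  apply Integrable.mono' (base_int hm0)
  · apply Measurable.aestronglyMeasurable
    fun_prop
  · filter_upwards [ae_restrict_mem measurableSet_Ioi] with t ht
    have ht0 : (0:ℝ) < t := ht
    rw [Real.norm_eq_abs, abs_of_nonneg (by positivity)]
    exact fF_le hy hz ht0

lemma intD (hy : 0 < y) (hz : 0 < z) :
    IntegrableOn
      (fun t : ℝ => (Real.sqrt (t*(t+y)))⁻¹ * ((t+z)*Real.sqrt (t+z))⁻¹) (Set.Ioi 0) := by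
  apply Integrable.mono' (((base_int hz)).const_mul ((Real.sqrt y * Real.sqrt z)⁻¹))
  · apply Measurable.aestronglyMeasurable
    fun_prop
  · filter_upwards [ae_restrict_mem measurableSet_Ioi] with t ht
    have ht0 : (0:ℝ) < t := ht
    have hty : (0:ℝ) < t + y := by linarith
    have htz : (0:ℝ) < t + z := by linarith
    rw [Real.norm_eq_abs, abs_of_nonneg (by positivity)]
    rw [Real.sqrt_mul ht0.le, ← mul_inv, ← mul_inv]
    apply inv_anti₀ (by positivity)
    have h1 : Real.sqrt y ≤ Real.sqrt (t+y) := Real.sqrt_le_sqrt (by linarith)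
    have h2 : Real.sqrt z ≤ Real.sqrt (t+z) := Real.sqrt_le_sqrt (by linarith)
    calc Real.sqrt y * Real.sqrt z * (Real.sqrt t * (t+z))
        = (Real.sqrt t * (t+z)) * (Real.sqrt y * Real.sqrt z) := by ring
      _ ≤ (Real.sqrt t * (t+z)) * (Real.sqrt (t+y) * Real.sqrt (t+z)) := by
          apply mul_le_mul_of_nonneg_left
            (mul_le_mul h1 h2 (Real.sqrt_nonneg z) (Real.sqrt_nonneg _)) (by positivity)
      _ = Real.sqrt t * Real.sqrt (t+y) * ((t+z) * Real.sqrt (t+z)) := by ring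

lemma intG (hy : 0 < y) (hz : 0 < z) :
    IntegrableOn
      (fun t : ℝ => (Real.sqrt ((t+y)*(t+z)*t))⁻¹ * (y/(t+y)+z/(t+z)) * t) (Set.Ioi 0) := by
  have hm0 : 0 < min y z := lt_min hy hz
  apply Integrable.mono' (((base_int hm0)).const_mul (y+z))
  · apply Measurable.aestronglyMeasurable
    fun_prop
  · filter_upwards [ae_restrict_mem measurableSet_Ioi] with t ht
    have ht0 : (0:ℝ) < t := ht
    have hty : (0:ℝ) < t + y := by linarith
    have htz : (0:ℝ) < t + z := by linarith
    rw [Real.norm_eq_abs, abs_of_nonneg (by positivity)]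
    have hst : (y/(t+y)+z/(t+z)) * t ≤ y + z := by
      rw [div_add_div _ _ hty.ne' htz.ne', div_mul_eq_mul_div, div_le_iff₀ (by positivity)]
      nlinarith [mul_pos (mul_pos hy hy) ht0, mul_pos (mul_pos hy hy) hz,
        mul_pos (mul_pos hz hz) ht0, mul_pos (mul_pos hy hz) hz]
    have hst0 : 0 ≤ (y/(t+y)+z/(t+z)) * t := by positivity
    calc (Real.sqrt ((t+y)*(t+z)*t))⁻¹ * (y/(t+y)+z/(t+z)) * t
        = (Real.sqrt ((t+y)*(t+z)*t))⁻¹ * ((y/(t+y)+z/(t+z)) * t) := by ring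
      _ ≤ (Real.sqrt t * (t + min y z))⁻¹ * (y+z) :=
          mul_le_mul (fF_le hy hz ht0) hst hst0 (by positivity)
      _ = (y+z) * (Real.sqrt t * (t + min y z))⁻¹ := mul_comm _ _

lemma hasDeriv_H (hy : 0 < y) (hz : 0 < z) {t : ℝ} (ht : 0 < t) :
    HasDerivAt (fun s : ℝ => -2*y * (Real.sqrt s * (Real.sqrt (s+y) * Real.sqrt (s+z))⁻¹))
      ((Real.sqrt ((t+y)*(t+z)*t))⁻¹ * (y/(t+y)+z/(t+z)) * t
        - z * (Real.sqrt ((t+y)*(t+z)*t))⁻¹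
        - z*(y-z) * ((Real.sqrt (t*(t+y)))⁻¹ * ((t+z)*Real.sqrt (t+z))⁻¹)) t := by
  have hty : (0:ℝ) < t + y := by linarith
  have htz : (0:ℝ) < t + z := by linarith
  have ha : 0 < Real.sqrt t := Real.sqrt_pos.2 ht
  have hb : 0 < Real.sqrt (t+y) := Real.sqrt_pos.2 hty
  have hc : 0 < Real.sqrt (t+z) := Real.sqrt_pos.2 htz
  have dA : HasDerivAt Real.sqrt (1 / (2 * Real.sqrt t)) t := Real.hasDerivAt_sqrt ht.ne'
  have dB : HasDerivAt (fun s : ℝ => Real.sqrt (s+y)) (1 / (2 * Real.sqrt (t+y))) t := by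
    simpa using (HasDerivAt.sqrt ((hasDerivAt_id t).add_const y) hty.ne')
  have dC : HasDerivAt (fun s : ℝ => Real.sqrt (s+z)) (1 / (2 * Real.sqrt (t+z))) t := by
    simpa using (HasDerivAt.sqrt ((hasDerivAt_id t).add_const z) htz.ne')
  have dBC : HasDerivAt (fun s : ℝ => Real.sqrt (s+y) * Real.sqrt (s+z))
      (1 / (2 * Real.sqrt (t+y)) * Real.sqrt (t+z)
        + Real.sqrt (t+y) * (1 / (2 * Real.sqrt (t+z)))) t := dB.mul dC
  have dInv := dBC.inv (by positivity : Real.sqrt (t+y) * Real.sqrt (t+z) ≠ 0)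
  have dProd := dA.mul dInv
  have dAll := dProd.const_mul (-2*y)
  refine dAll.congr_deriv (Eq.symm ?_)
  simp only [Pi.inv_apply]
  have haa : Real.sqrt t * Real.sqrt t = t := Real.mul_self_sqrt ht.le
  have hbb : Real.sqrt (t+y) * Real.sqrt (t+y) = t + y := Real.mul_self_sqrt hty.le
  have hcc : Real.sqrt (t+z) * Real.sqrt (t+z) = t + z := Real.mul_self_sqrt htz.le
  rw [Real.sqrt_mul (by positivity) t, Real.sqrt_mul hty.le, Real.sqrt_mul ht.le]
  generalize hA : Real.sqrt t = a at *
  generalize hB : Real.sqrt (t+y) = b at *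
  generalize hC : Real.sqrt (t+z) = c at *
  have h1 : t = a * a := haa.symm
  subst h1
  have h2 : y = b*b - a*a := by linarith
  subst h2
  have h3 : z = c*c - a*a := by linarith
  subst h3
  field_simp
  ring

lemma key_integral (hy : 0 < y) (hz : 0 < z) :
    ∫ t in Set.Ioi (0:ℝ),
      ((Real.sqrt ((t+y)*(t+z)*t))⁻¹ * (y/(t+y)+z/(t+z)) * t
        - z * (Real.sqrt ((t+y)*(t+z)*t))⁻¹
        - z*(y-z) * ((Real.sqrt (t*(t+y)))⁻¹ * ((t+z)*Real.sqrt (t+z))⁻¹)) = 0 := by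
  have hint : IntegrableOn
      (fun t : ℝ => (Real.sqrt ((t+y)*(t+z)*t))⁻¹ * (y/(t+y)+z/(t+z)) * t
        - z * (Real.sqrt ((t+y)*(t+z)*t))⁻¹
        - z*(y-z) * ((Real.sqrt (t*(t+y)))⁻¹ * ((t+z)*Real.sqrt (t+z))⁻¹)) (Set.Ioi 0) :=
    ((intG hy hz).sub ((intF hy hz).const_mul z)).sub ((intD hy hz).const_mul (z*(y-z)))
  have hcont : ContinuousWithinAt
      (fun s : ℝ => -2*y * (Real.sqrt s * (Real.sqrt (s+y) * Real.sqrt (s+z))⁻¹))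
      (Set.Ici 0) 0 := by
    apply ContinuousAt.continuousWithinAt
    have hden : ContinuousAt (fun s : ℝ => Real.sqrt (s+y) * Real.sqrt (s+z)) 0 :=
      (((Real.continuous_sqrt.comp (continuous_id.add continuous_const)).mul
        (Real.continuous_sqrt.comp (continuous_id.add continuous_const)))).continuousAt
    have hne : Real.sqrt (0+y) * Real.sqrt (0+z) ≠ 0 := by
      have := Real.sqrt_pos.2 (by linarith : (0:ℝ) < 0 + y)
      have := Real.sqrt_pos.2 (by linarith : (0:ℝ) < 0 + z)
      positivity
    exact continuousAt_const.mul
      (Real.continuous_sqrt.continuousAt.mul (hden.inv₀ hne))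
  have htend : Tendsto
      (fun s : ℝ => -2*y * (Real.sqrt s * (Real.sqrt (s+y) * Real.sqrt (s+z))⁻¹))
      atTop (𝓝 0) := by
    have hinner : Tendsto
        (fun s : ℝ => Real.sqrt s * (Real.sqrt (s+y) * Real.sqrt (s+z))⁻¹) atTop (𝓝 0) := by
      have h0 : Tendsto (fun s : ℝ => (Real.sqrt s)⁻¹) atTop (𝓝 0) :=
        tendsto_inv_atTop_zero.comp sqrt_tendsto_atTop'
      apply tendsto_of_tendsto_of_tendsto_of_le_of_le' tendsto_const_nhds h0
      · filter_upwards [eventually_gt_atTop (0:ℝ)] with s hs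
        positivity
      · filter_upwards [eventually_gt_atTop (0:ℝ)] with s hs
        have hsy : (0:ℝ) < s + y := by linarith
        have hsz : (0:ℝ) < s + z := by linarith
        have h1 : Real.sqrt s ≤ Real.sqrt (s+y) := Real.sqrt_le_sqrt (by linarith)
        have h2 : Real.sqrt s ≤ Real.sqrt (s+z) := Real.sqrt_le_sqrt (by linarith)
        have hs0 : 0 < Real.sqrt s := Real.sqrt_pos.2 hs
        have key : Real.sqrt s * Real.sqrt s ≤ Real.sqrt (s+y) * Real.sqrt (s+z) :=
          mul_le_mul h1 h2 hs0.le (Real.sqrt_nonneg _)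
        calc Real.sqrt s * (Real.sqrt (s+y) * Real.sqrt (s+z))⁻¹
            ≤ Real.sqrt s * (Real.sqrt s * Real.sqrt s)⁻¹ := by
              apply mul_le_mul_of_nonneg_left
                (inv_anti₀ (by positivity) key) (Real.sqrt_nonneg s)
          _ = (Real.sqrt s)⁻¹ := by field_simp
    have := hinner.const_mul (-2*y)
    simpa using this
  have := integral_Ioi_of_hasDerivAt_of_tendsto hcont
    (fun x hx => hasDeriv_H hy hz hx) hint htend
  rw [this]
  simp [Real.sqrt_zero]


theorem stmt11 (y z : ℝ) (hy : 0 < y) (hz : 0 < z) (hne : y ≠ z) :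
    RD 0 y z = (3 / (z * (y - z))) * (2 * RG y z 0 - z * RF y z 0) := by
  have hzne : z ≠ 0 := hz.ne'
  have hyz : y - z ≠ 0 := sub_ne_zero_of_ne hne
  have h := key_integral hy hz
  have hGzF : IntegrableOn (fun t : ℝ =>
      (Real.sqrt ((t+y)*(t+z)*t))⁻¹ * (y/(t+y)+z/(t+z)) * t
        - z * (Real.sqrt ((t+y)*(t+z)*t))⁻¹) (Set.Ioi 0) :=
    (intG hy hz).sub ((intF hy hz).const_mul z)
  have hzF : IntegrableOn (fun t : ℝ => z * (Real.sqrt ((t+y)*(t+z)*t))⁻¹) (Set.Ioi 0) :=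
    (intF hy hz).const_mul z
  have hCD : IntegrableOn (fun t : ℝ =>
      z*(y-z) * ((Real.sqrt (t*(t+y)))⁻¹ * ((t+z)*Real.sqrt (t+z))⁻¹)) (Set.Ioi 0) :=
    (intD hy hz).const_mul (z*(y-z))
  have h1 := integral_sub hGzF hCD
  have h2 := integral_sub (intG hy hz) hzF
  rw [h1, h2, integral_const_mul, integral_const_mul] at h
  unfold RD RG RF
  simp only [add_zero, zero_div]
  conv_rhs => rw [div_mul_eq_mul_div]
  rw [eq_div_iff (mul_ne_zero hzne hyz)]
  linear_combination (-3/2) * h
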